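/- The Laplace transform of t ↦ t^{β-1} E_{α,β}(λ t^α) is ς^{α-β}/(ς^α - λ), i.e. ∫_0^∞ e^{-ς t} t^{β-1} E_{α,β}(λ t^α) dt = ς^{α-β}/(ς^α - λ) for real ς > 0 with ς^α > |λ|, where 0 < α ≤ 1, β > 0. -/

import Mathlib

open MeasureTheory

/-- The generalized Mittag-Leffler function `E_{α,β}`. -/
noncomputable def mittagLeffler (α β z : ℝ) : ℝ :=
  ∑' k : ℕ, z ^ k / Real.Gamma (α * k + β)

lemma aux_integrable {s b : ℝ} (hs : 0 < s) (hb : 0 < b) :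
    IntegrableOn (fun t : ℝ => t ^ (s - 1) * Real.exp (-(b * t))) (Set.Ioi 0) := by
  have h := integrableOn_rpow_mul_exp_neg_mul_rpow (p := 1) (s := s - 1) (b := b)
    (by linarith) one_pos hb
  refine h.congr_fun (fun t ht => ?_) measurableSet_Ioi
  dsimp only
  rw [Real.rpow_one, neg_mul]

lemma aux_value {s b : ℝ} (hs : 0 < s) (hb : 0 < b) :
    ∫ t in Set.Ioi (0 : ℝ), t ^ (s - 1) * Real.exp (-(b * t))
      = (1 / b) ^ s * Real.Gamma s :=
  Real.integral_rpow_mul_exp_neg_mul_Ioi hs hb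

theorem laplace_mittagLeffler (α β ς lam : ℝ) (hα0 : 0 < α) (hα1 : α ≤ 1)
    (hβ : 0 < β) (hς : 0 < ς) (hdom : |lam| < ς ^ α) :
    ∫ t in Set.Ioi (0 : ℝ),
        Real.exp (-(ς * t)) * t ^ (β - 1) * mittagLeffler α β (lam * t ^ α) =
      ς ^ (α - β) / (ς ^ α - lam) := by
  have hςα : (0:ℝ) < ς ^ α := Real.rpow_pos_of_pos hς α
  have hspos : ∀ k : ℕ, (0:ℝ) < α * k + β := fun k => by positivity
  have hΓpos : ∀ k : ℕ, (0:ℝ) < Real.Gamma (α * k + β) :=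
    fun k => Real.Gamma_pos_of_pos (hspos k)
  set F : ℕ → ℝ → ℝ := fun k t =>
    lam ^ k / Real.Gamma (α * k + β) * (t ^ (α * k + β - 1) * Real.exp (-(ς * t))) with hF
  -- pointwise expansion on Ioi 0
  have hcong : ∀ t ∈ Set.Ioi (0:ℝ),
      Real.exp (-(ς * t)) * t ^ (β - 1) * mittagLeffler α β (lam * t ^ α)
        = ∑' k : ℕ, F k t := by
    intro t ht
    have ht0 : (0:ℝ) < t := ht
    rw [mittagLeffler, ← tsum_mul_left]
    refine tsum_congr fun k => ?_
    have h1 : (lam * t ^ α) ^ k = lam ^ k * t ^ (α * k) := by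
      rw [mul_pow, ← Real.rpow_natCast (t ^ α) k, ← Real.rpow_mul ht0.le]
    have h2 : t ^ (β - 1) * t ^ (α * k) = t ^ (α * k + β - 1) := by
      rw [← Real.rpow_add ht0]; ring_nf
    rw [hF, h1]
    field_simp
    rw [← h2]; ring
  rw [setIntegral_congr_fun measurableSet_Ioi hcong]
  have hint : ∀ k : ℕ, Integrable (F k) (volume.restrict (Set.Ioi 0)) := fun k =>
    (aux_integrable (hspos k) hς).const_mul _
  have hnorm : ∀ k : ℕ, ∫ t in Set.Ioi (0:ℝ), ‖F k t‖
      = |lam| ^ k * ((1 / ς) ^ (α * k + β)) := by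
    intro k
    have : ∀ t ∈ Set.Ioi (0:ℝ), ‖F k t‖
        = |lam| ^ k / Real.Gamma (α * k + β)
            * (t ^ (α * k + β - 1) * Real.exp (-(ς * t))) := by
      intro t ht
      have ht0 : (0:ℝ) < t := ht
      rw [hF, Real.norm_eq_abs, abs_mul,
        abs_of_nonneg (mul_nonneg (Real.rpow_nonneg ht0.le _) (Real.exp_pos _).le),
        abs_div, abs_pow, abs_of_pos (hΓpos k)]
    rw [setIntegral_congr_fun measurableSet_Ioi this, integral_const_mul,
      aux_value (hspos k) hς]
    field_simp
  have hsum : Summable fun k : ℕ => ∫ t in Set.Ioi (0:ℝ), ‖F k t‖ := by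
    simp_rw [hnorm]
    have hr : ∀ k : ℕ, |lam| ^ k * ((1 / ς) ^ (α * k + β))
        = (1 / ς) ^ β * (|lam| * (1 / ς) ^ α) ^ k := by
      intro k
      rw [Real.rpow_add (by positivity), mul_pow, ← Real.rpow_natCast ((1/ς) ^ α) k,
        ← Real.rpow_mul (by positivity)]
      ring
    simp_rw [hr]
    refine Summable.mul_left _ (summable_geometric_of_lt_one (by positivity) ?_)
    rw [one_div, Real.inv_rpow hς.le]
    calc |lam| * (ς ^ α)⁻¹ < ς ^ α * (ς ^ α)⁻¹ := by
          exact mul_lt_mul_of_pos_right hdom (by positivity)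
      _ = 1 := mul_inv_cancel₀ (ne_of_gt hςα)
  rw [← integral_tsum_of_summable_integral_norm hint hsum]
  have hval : ∀ k : ℕ, ∫ t in Set.Ioi (0:ℝ), F k t
      = (1 / ς) ^ β * (lam * (ς ^ α)⁻¹) ^ k := by
    intro k
    rw [hF]
    simp only
    rw [integral_const_mul, aux_value (hspos k) hς]
    have hinv : ((ς:ℝ) ^ α)⁻¹ = (1/ς) ^ α := by rw [one_div, Real.inv_rpow hς.le]
    rw [Real.rpow_add (by positivity : (0:ℝ) < 1/ς), hinv, mul_pow,
      ← Real.rpow_natCast ((1/ς) ^ α) k, ← Real.rpow_mul (by positivity)]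
    field_simp
  simp_rw [hval]
  rw [tsum_mul_left, tsum_geometric_of_abs_lt_one (by
    rw [abs_mul, abs_inv, abs_of_pos hςα]
    calc |lam| * (ς ^ α)⁻¹ < ς ^ α * (ς ^ α)⁻¹ :=
          mul_lt_mul_of_pos_right hdom (by positivity)
      _ = 1 := mul_inv_cancel₀ (ne_of_gt hςα))]
  have hne : ς ^ α - lam ≠ 0 := by
    have : lam < ς ^ α := lt_of_le_of_lt (le_abs_self lam) hdom
    linarith
  have h1 : (1/ς:ℝ) ^ β = (ς ^ β)⁻¹ := by rw [one_div, Real.inv_rpow hς.le]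
  have h2 : (1:ℝ) - lam * (ς ^ α)⁻¹ = (ς ^ α - lam) * (ς ^ α)⁻¹ := by
    field_simp
  rw [h1, h2, Real.rpow_sub hς, mul_inv, inv_inv]
  have hβ0 : (ς:ℝ) ^ β ≠ 0 := ne_of_gt (Real.rpow_pos_of_pos hς β)
  field_simp
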